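/- arXiv:0708.2474 — 4 statements merged into one kernel-verified Lean document; each statement's English description precedes it below -/
import Mathlib

section
/- Let f : ℝⁿ → ℝ be a polynomial of degree d ≥ 2. Suppose (x_k) is a sequence in ℝⁿ such that ‖x_k‖ → +∞, x_k/‖x_k‖ → u for some unit vector u ∈ S^{n-1}, and ‖∇f(x_k)‖ → 0. Then ∇f_d(u) = 0, i.e. ∂f_d/∂x_i(u) = 0 for every i = 1, …, n. -/
open MvPolynomial Filter Topology

/-- Evaluation of a multivariate polynomial at a point of Euclidean space. -/
noncomputable def pevalE {n : ℕ} (f : MvPolynomial (Fin n) ℝ) (x : EuclideanSpace ℝ (Fin n)) : ℝ :=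
  eval (EuclideanSpace.equiv (Fin n) ℝ x) f

/-- The gradient vector (∂f/∂x_1, …, ∂f/∂x_n) of a polynomial, at a point of Euclidean space. -/
noncomputable def pgrad {n : ℕ} (f : MvPolynomial (Fin n) ℝ) (x : EuclideanSpace ℝ (Fin n)) :
    EuclideanSpace ℝ (Fin n) :=
  (EuclideanSpace.equiv (Fin n) ℝ).symm
    (fun i => eval (EuclideanSpace.equiv (Fin n) ℝ x) (pderiv i f))

lemma aux_degree_add {σ : Type*} (a b : σ →₀ ℕ) :
    (a + b).degree = a.degree + b.degree := by
  simp only [Finsupp.degree_eq_weight_one]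
  exact map_add _ a b

lemma aux_degree_single {σ : Type*} (i : σ) : (Finsupp.single i 1).degree = 1 := by
  classical
  rw [Finsupp.degree_apply, Finsupp.support_single_ne_zero _ one_ne_zero]
  simp

lemma aux_eval_smul_isHomogeneous {σ : Type*} {φ : MvPolynomial σ ℝ} {m : ℕ}
    (h : φ.IsHomogeneous m) (c : ℝ) (x : σ → ℝ) :
    eval (c • x) φ = c ^ m * eval x φ := by
  rw [eval_eq, eval_eq, Finset.mul_sum]
  refine Finset.sum_congr rfl fun s hs => ?_
  have hdeg : Finsupp.degree s = m := by
    by_contra hne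
    exact (MvPolynomial.mem_support_iff.mp hs) (h.coeff_eq_zero hne)
  have hprod : ∏ i ∈ s.support, (c • x) i ^ s i
      = (∏ i ∈ s.support, c ^ s i) * ∏ i ∈ s.support, x i ^ s i := by
    rw [← Finset.prod_mul_distrib]
    exact Finset.prod_congr rfl fun i _ => by simp [mul_pow]
  rw [hprod, Finset.prod_pow_eq_pow_sum]
  rw [show ∑ i ∈ s.support, s i = m from hdeg]
  ring

lemma aux_pderiv_homogeneousComponent {n : ℕ} (i : Fin n) (d : ℕ) (hd : 1 ≤ d)
    (f : MvPolynomial (Fin n) ℝ) :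
    pderiv i (homogeneousComponent d f) = homogeneousComponent (d - 1) (pderiv i f) := by
  induction f using MvPolynomial.induction_on' with
  | add p q hp hq => simp only [map_add, hp, hq]
  | monomial s a =>
    have hm : ∀ m : ℕ, homogeneousComponent m (monomial s a)
        = if m = Finsupp.degree s then monomial s a else 0 := fun m =>
      homogeneousComponent_of_mem
        ((mem_homogeneousSubmodule _ _).mpr (isHomogeneous_monomial a rfl))
    rcases eq_or_ne (Finsupp.degree s) d with hsd | hsd
    · rw [hm d, if_pos hsd.symm, pderiv_monomial]
      by_cases hsi : s i = 0
      · simp [hsi]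
      · have hle : Finsupp.single i 1 ≤ s := by
          rw [Finsupp.single_le_iff]; omega
        have h1 : (s - Finsupp.single i 1) + Finsupp.single i 1 = s :=
          tsub_add_cancel_of_le hle
        have hdeg : Finsupp.degree (s - Finsupp.single i 1) = d - 1 := by
          have h2 := congrArg Finsupp.degree h1
          rw [aux_degree_add, aux_degree_single, hsd] at h2
          omega
        rw [homogeneousComponent_of_mem
          ((mem_homogeneousSubmodule _ _).mpr (isHomogeneous_monomial _ hdeg)), if_pos rfl]
    · rw [hm d, if_neg fun h => hsd h.symm, map_zero, pderiv_monomial]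
      by_cases hsi : s i = 0
      · simp [hsi]
      · have hle : Finsupp.single i 1 ≤ s := by
          rw [Finsupp.single_le_iff]; omega
        have h1 : (s - Finsupp.single i 1) + Finsupp.single i 1 = s :=
          tsub_add_cancel_of_le hle
        have h2 := congrArg Finsupp.degree h1
        rw [aux_degree_add, aux_degree_single] at h2
        have hdeg2 : (s - Finsupp.single i 1).degree = s.degree - 1 := by omega
        rw [homogeneousComponent_of_mem
          ((mem_homogeneousSubmodule _ _).mpr (isHomogeneous_monomial _ hdeg2)),
          if_neg (by omega)]

lemma aux_totalDegree_pderiv_le {n : ℕ} (i : Fin n) (f : MvPolynomial (Fin n) ℝ) (d : ℕ)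
    (hdeg : f.totalDegree ≤ d) : (pderiv i f).totalDegree ≤ d - 1 := by
  conv_lhs => rw [f.as_sum]
  rw [map_sum]
  refine le_trans (totalDegree_finset_sum _ _) (Finset.sup_le fun s hs => ?_)
  rw [pderiv_monomial]
  by_cases hsi : s i = 0
  · simp [hsi]
  · refine le_trans (totalDegree_monomial_le _ _) ?_
    have hle : Finsupp.single i 1 ≤ s := by
      rw [Finsupp.single_le_iff]; omega
    have h1 : (s - Finsupp.single i 1) + Finsupp.single i 1 = s :=
      tsub_add_cancel_of_le hle
    have h2 := congrArg Finsupp.degree h1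
    rw [aux_degree_add, aux_degree_single] at h2
    have h3 : Finsupp.degree s ≤ d := by
      refine le_trans ?_ hdeg
      exact Finset.le_sup (f := fun s => s.sum fun _ e => e) hs
    have h4 : ((s - Finsupp.single i 1).sum fun _ => id) = (s - Finsupp.single i 1).degree := by
      rfl
    rw [h4]
    omega

lemma aux_key {n : ℕ} (g : MvPolynomial (Fin n) ℝ) (m : ℕ) (hm : 1 ≤ m)
    (hg : g.totalDegree ≤ m)
    (x : ℕ → EuclideanSpace ℝ (Fin n)) (u : EuclideanSpace ℝ (Fin n))
    (hnorm : Tendsto (fun k => ‖x k‖) atTop atTop)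
    (hdir : Tendsto (fun k => (‖x k‖)⁻¹ • x k) atTop (𝓝 u))
    (hev : Tendsto (fun k => eval (EuclideanSpace.equiv (Fin n) ℝ (x k)) g) atTop (𝓝 0)) :
    eval (EuclideanSpace.equiv (Fin n) ℝ u) (homogeneousComponent m g) = 0 := by
  set e := EuclideanSpace.equiv (Fin n) ℝ with he
  have hcont : ∀ j : ℕ, Tendsto (fun k => eval (e ((‖x k‖)⁻¹ • x k)) (homogeneousComponent j g))
      atTop (𝓝 (eval (e u) (homogeneousComponent j g))) := by
    intro j
    exact (((MvPolynomial.continuous_eval (homogeneousComponent j g)).comp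
      e.continuous).tendsto u).comp hdir
  have hinv : Tendsto (fun k => (‖x k‖)⁻¹) atTop (𝓝 0) := tendsto_inv_atTop_zero.comp hnorm
  set S : ℕ → ℝ := fun k => ∑ j ∈ Finset.range (m + 1),
    ((‖x k‖)⁻¹) ^ (m - j) * eval (e ((‖x k‖)⁻¹ • x k)) (homogeneousComponent j g) with hSdef
  have hS : Tendsto S atTop (𝓝 (∑ j ∈ Finset.range (m + 1),
      (0 : ℝ) ^ (m - j) * eval (e u) (homogeneousComponent j g))) :=
    tendsto_finset_sum _ fun j _ => (hinv.pow _).mul (hcont j)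
  have hsum : (∑ j ∈ Finset.range (m + 1),
      (0 : ℝ) ^ (m - j) * eval (e u) (homogeneousComponent j g))
      = eval (e u) (homogeneousComponent m g) := by
    rw [Finset.sum_eq_single m]
    · simp
    · intro j hj hne
      have hj' : j < m := by
        have := Finset.mem_range.mp hj; omega
      rw [zero_pow (by omega : m - j ≠ 0), zero_mul]
    · intro h; exact absurd (Finset.self_mem_range_succ m) h
  have hdecomp : g = ∑ j ∈ Finset.range (m + 1), homogeneousComponent j g := by
    conv_lhs => rw [← sum_homogeneousComponent g]
    refine Finset.sum_subset (Finset.range_subset_range.mpr (by omega))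
      (fun j _ hj => ?_)
    refine homogeneousComponent_eq_zero _ _ ?_
    have := Finset.mem_range.not.mp hj
    omega
  have heq : S =ᶠ[atTop] (fun k => ((‖x k‖)⁻¹) ^ m * eval (e (x k)) g) := by
    filter_upwards [hnorm.eventually_ge_atTop 1] with k hk
    have hc : (0 : ℝ) < ‖x k‖ := lt_of_lt_of_le one_pos hk
    have hx : x k = ‖x k‖ • ((‖x k‖)⁻¹ • x k) := by
      rw [smul_smul, mul_inv_cancel₀ (ne_of_gt hc), one_smul]
    have hgsum : eval (e (x k)) g = ∑ j ∈ Finset.range (m + 1),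
        (‖x k‖) ^ j * eval (e ((‖x k‖)⁻¹ • x k)) (homogeneousComponent j g) := by
      conv_lhs => rw [hx, hdecomp]
      rw [map_sum]
      refine Finset.sum_congr rfl fun j hj => ?_
      rw [map_smul]
      exact aux_eval_smul_isHomogeneous (homogeneousComponent_isHomogeneous j g) _ _
    rw [hgsum, Finset.mul_sum]
    refine Finset.sum_congr rfl fun j hj => ?_
    have hj' : j ≤ m := by
      have := Finset.mem_range.mp hj; omega
    have hpow : ((‖x k‖)⁻¹) ^ (m - j) = ((‖x k‖)⁻¹) ^ m * (‖x k‖) ^ j := by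
      rw [pow_sub₀ _ (inv_ne_zero (ne_of_gt hc)) hj']
      congr 1
      rw [inv_pow, inv_inv]
    rw [hpow, mul_assoc]
  have hlim0 : Tendsto (fun k => ((‖x k‖)⁻¹) ^ m * eval (e (x k)) g) atTop (𝓝 0) := by
    have h1 := (hinv.pow m).mul hev
    simpa using h1
  rw [← hsum]
  exact tendsto_nhds_unique hS (hlim0.congr' heq.symm)

lemma aux_coord_le_norm {n : ℕ} (v : EuclideanSpace ℝ (Fin n)) (i : Fin n) :
    |EuclideanSpace.equiv (Fin n) ℝ v i| ≤ ‖v‖ := by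
  rw [EuclideanSpace.norm_eq]
  have h1 : |EuclideanSpace.equiv (Fin n) ℝ v i|
      = Real.sqrt (‖v i‖ ^ 2) := by
    rw [Real.sqrt_sq_eq_abs, Real.norm_eq_abs, abs_abs]
    rfl
  rw [h1]
  apply Real.sqrt_le_sqrt
  exact Finset.single_le_sum (f := fun i => ‖v i‖ ^ 2)
    (fun j _ => sq_nonneg _) (Finset.mem_univ i)

/-- If `f : ℝⁿ → ℝ` is a polynomial of degree `d ≥ 2` and `(x_k)` is a sequence with
`‖x_k‖ → ∞`, `x_k/‖x_k‖ → u` (`u` a unit vector) and `‖∇f(x_k)‖ → 0`, then `∇f_d(u) = 0`. -/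
theorem statement0 {n : ℕ} (f : MvPolynomial (Fin n) ℝ) (d : ℕ) (hd : 2 ≤ d)
    (hdeg : f.totalDegree = d)
    (x : ℕ → EuclideanSpace ℝ (Fin n)) (u : EuclideanSpace ℝ (Fin n)) (hu : ‖u‖ = 1)
    (hnorm : Tendsto (fun k => ‖x k‖) atTop atTop)
    (hdir : Tendsto (fun k => (‖x k‖)⁻¹ • x k) atTop (𝓝 u))
    (hgrad : Tendsto (fun k => ‖pgrad f (x k)‖) atTop (𝓝 0)) :
    pgrad (homogeneousComponent d f) u = 0 := by
  have key : ∀ i : Fin n,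
      eval (EuclideanSpace.equiv (Fin n) ℝ u) (pderiv i (homogeneousComponent d f)) = 0 := by
    intro i
    rw [aux_pderiv_homogeneousComponent i d (by omega) f]
    have hev : Tendsto (fun k => eval (EuclideanSpace.equiv (Fin n) ℝ (x k)) (pderiv i f))
        atTop (𝓝 0) := by
      apply squeeze_zero_norm _ hgrad
      intro k
      have : eval (EuclideanSpace.equiv (Fin n) ℝ (x k)) (pderiv i f)
          = EuclideanSpace.equiv (Fin n) ℝ (pgrad f (x k)) i := by
        simp [pgrad]
      rw [Real.norm_eq_abs, this]
      exact aux_coord_le_norm _ i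
    exact aux_key (pderiv i f) (d - 1) (by omega)
      (aux_totalDegree_pderiv_le i f d (le_of_eq hdeg)) x u hnorm hdir hev
  have hfun : (fun i => eval (EuclideanSpace.equiv (Fin n) ℝ u)
      (pderiv i (homogeneousComponent d f))) = (0 : Fin n → ℝ) := funext key
  show (EuclideanSpace.equiv (Fin n) ℝ).symm _ = 0
  rw [hfun]
  exact map_zero _
end

section
/- Let f : ℂⁿ → ℂ be a polynomial of degree d ≥ 2 and let c ∈ ℂ. Suppose (x_k) is a sequence in ℂⁿ such that ‖x_k‖ → +∞, x_k/‖x_k‖ → u for some vector u ∈ ℂⁿ with ‖u‖ = 1, f(x_k) → c, and ‖x_k‖·‖∇f(x_k)‖ → 0. Then ∇f_d(u) = 0 and f_{d-1}(u) = 0. -/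
open MvPolynomial Filter Topology

/-- Evaluation of a complex multivariate polynomial at a point of Hermitian space `ℂⁿ`. -/
noncomputable def cpevalE {n : ℕ} (f : MvPolynomial (Fin n) ℂ) (x : EuclideanSpace ℂ (Fin n)) : ℂ :=
  eval (EuclideanSpace.equiv (Fin n) ℂ x) f

/-- The vector (∂f/∂x_1, …, ∂f/∂x_n) of complex partial derivatives of a polynomial,
at a point of Hermitian space `ℂⁿ`. -/
noncomputable def cpgrad {n : ℕ} (f : MvPolynomial (Fin n) ℂ) (x : EuclideanSpace ℂ (Fin n)) :
    EuclideanSpace ℂ (Fin n) :=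
  (EuclideanSpace.equiv (Fin n) ℂ).symm
    (fun i => eval (EuclideanSpace.equiv (Fin n) ℂ x) (pderiv i f))

namespace S2Aux

variable {n : ℕ}

lemma degree_fintype (d : Fin n →₀ ℕ) : d.degree = ∑ i, d i :=
  Finset.sum_subset (Finset.subset_univ _)
    (fun i _ hi => by simpa using Finsupp.notMem_support_iff.mp hi)

lemma degree_add (a b : Fin n →₀ ℕ) : (a + b).degree = a.degree + b.degree := by
  simp [degree_fintype, Finset.sum_add_distrib]

lemma degree_single (i : Fin n) : (Finsupp.single i 1).degree = 1 := by
  simp [degree_fintype, Finsupp.single_apply]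

lemma mem_support_degree {p : MvPolynomial (Fin n) ℂ} {m : ℕ} (hp : p.IsHomogeneous m)
    {d : Fin n →₀ ℕ} (hd : d ∈ p.support) : d.degree = m := by
  rw [Finsupp.degree_eq_weight_one]
  exact hp (MvPolynomial.mem_support_iff.mp hd)

lemma eval_smul_hom {p : MvPolynomial (Fin n) ℂ} {m : ℕ} (hp : p.IsHomogeneous m)
    (c : ℂ) (y : Fin n → ℂ) : eval (c • y) p = c ^ m * eval y p := by
  rw [eval_eq, eval_eq, Finset.mul_sum]
  refine Finset.sum_congr rfl fun d hd => ?_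
  have hdm : d.degree = m := mem_support_degree hp hd
  have : ∏ i ∈ d.support, (c • y) i ^ d i
      = c ^ m * ∏ i ∈ d.support, y i ^ d i := by
    simp only [Pi.smul_apply, smul_eq_mul, mul_pow]
    rw [Finset.prod_mul_distrib, Finset.prod_pow_eq_pow_sum]
    rw [show ∑ i ∈ d.support, d i = d.degree from rfl, hdm]
  rw [this]; ring

lemma isHomogeneous_pderiv {p : MvPolynomial (Fin n) ℂ} {m : ℕ} (hp : p.IsHomogeneous m)
    (i : Fin n) : (pderiv i p).IsHomogeneous (m - 1) := by
  rw [← support_sum_monomial_coeff p, map_sum]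
  apply IsHomogeneous.sum
  intro d hd
  rw [pderiv_monomial]
  rcases Nat.eq_zero_or_pos (d i) with h0 | h0
  · simp [h0]
    exact isHomogeneous_zero _ _ _
  · apply isHomogeneous_monomial
    have hle : Finsupp.single i 1 ≤ d := Finsupp.single_le_iff.mpr h0
    have hca : (d - Finsupp.single i 1) + Finsupp.single i 1 = d := tsub_add_cancel_of_le hle
    have := congrArg Finsupp.degree hca
    rw [degree_add, degree_single] at this
    have hdm : d.degree = m := mem_support_degree hp hd
    omega

lemma euler_monomial (d : Fin n →₀ ℕ) (r : ℂ) (y : Fin n → ℂ) :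
    ∑ i, y i * eval y (pderiv i (monomial d r)) = (d.degree : ℂ) * eval y (monomial d r) := by
  classical
  have hterm : ∀ i, y i * eval y (pderiv i (monomial d r))
      = (d i : ℂ) * eval y (monomial d r) := by
    intro i
    rw [pderiv_monomial, eval_monomial, eval_monomial, Finsupp.prod_pow, Finsupp.prod_pow]
    rcases Nat.eq_zero_or_pos (d i) with h0 | h0
    · simp [h0]
    · set ed : Fin n →₀ ℕ := d - Finsupp.single i 1 with hed
      have hsub : ∀ j, ed j = if j = i then d i - 1 else d j := by
        intro j
        rcases eq_or_ne j i with h | h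
        · simp [hed, Finsupp.sub_apply, Finsupp.single_apply, h]
        · simp [hed, Finsupp.sub_apply, Finsupp.single_apply, h, Ne.symm h]
      have key : y i * ∏ j, y j ^ ed j = ∏ j, y j ^ d j := by
        rw [← Finset.mul_prod_erase Finset.univ _ (Finset.mem_univ i),
            ← Finset.mul_prod_erase Finset.univ (fun j => y j ^ d j) (Finset.mem_univ i),
            ← mul_assoc]
        congr 1
        · rw [hsub i, if_pos rfl, ← pow_succ', Nat.sub_add_cancel h0]
        · exact Finset.prod_congr rfl fun j hj => by
            rw [hsub j, if_neg (Finset.mem_erase.mp hj).1]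
      calc y i * (r * d i * ∏ j, y j ^ ed j)
          = (r * d i) * (y i * ∏ j, y j ^ ed j) := by ring
        _ = (d i : ℂ) * (r * ∏ j, y j ^ d j) := by rw [key]; ring
  rw [Finset.sum_congr rfl fun i _ => hterm i, ← Finset.sum_mul]
  congr 1
  rw [degree_fintype]
  push_cast
  rfl

lemma euler {p : MvPolynomial (Fin n) ℂ} {m : ℕ} (hp : p.IsHomogeneous m) (y : Fin n → ℂ) :
    ∑ i, y i * eval y (pderiv i p) = (m : ℂ) * eval y p := by
  have hL : ∀ i, eval y (pderiv i p)
      = ∑ d ∈ p.support, eval y (pderiv i (monomial d (coeff d p))) := fun i => by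
    rw [← map_sum, ← map_sum, support_sum_monomial_coeff]
  have hR : eval y p = ∑ d ∈ p.support, eval y (monomial d (coeff d p)) := by
    rw [← map_sum, support_sum_monomial_coeff]
  simp_rw [hL, Finset.mul_sum]
  rw [Finset.sum_comm, hR, Finset.mul_sum]
  refine Finset.sum_congr rfl fun d hd => ?_
  rw [euler_monomial, mem_support_degree hp hd]

lemma key {α : Type*} [TopologicalSpace α] (m : ℕ) (hm : 1 ≤ m)
    (φ : ℕ → α → ℂ) (hφ : ∀ j, Continuous (φ j))
    (t : ℕ → ℝ) (ht : Tendsto t atTop atTop)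
    (v : ℕ → α) (u : α) (hv : Tendsto v atTop (𝓝 u)) (L : ℂ)
    (hsum : Tendsto (fun k => ∑ j ∈ Finset.range (m+1), (t k : ℂ) ^ j * φ j (v k))
      atTop (𝓝 L)) :
    φ m u = 0 := by
  have htne : ∀ᶠ k in atTop, (1:ℝ) ≤ t k := ht.eventually_ge_atTop 1
  have hinv : Tendsto (fun k => ((t k : ℂ))⁻¹) atTop (𝓝 0) := by
    rw [tendsto_zero_iff_norm_tendsto_zero]
    refine (ht.inv_tendsto_atTop).congr' ?_
    filter_upwards [htne] with k hk
    simp only [Pi.inv_apply, norm_inv, Complex.norm_real, Real.norm_eq_abs,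
      abs_of_nonneg (by linarith : (0:ℝ) ≤ t k)]
  have h1 : Tendsto (fun k => ((t k:ℂ)⁻¹)^m *
      ∑ j ∈ Finset.range (m+1), (t k : ℂ) ^ j * φ j (v k)) atTop (𝓝 0) := by
    have := (hinv.pow m).mul hsum
    rw [zero_pow (by omega), zero_mul] at this
    exact this
  have h2 : Tendsto (fun k => ((t k:ℂ)⁻¹)^m *
      ∑ j ∈ Finset.range (m+1), (t k : ℂ) ^ j * φ j (v k)) atTop (𝓝 (φ m u)) := by
    have hterm : ∀ j ∈ Finset.range (m+1),
        Tendsto (fun k => ((t k:ℂ)⁻¹)^m * ((t k : ℂ) ^ j * φ j (v k)))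
          atTop (𝓝 (if j = m then φ m u else 0)) := by
      intro j hj
      have hφj : Tendsto (fun k => φ j (v k)) atTop (𝓝 (φ j u)) :=
        ((hφ j).tendsto u).comp hv
      rcases eq_or_lt_of_le (Nat.lt_succ_iff.mp (Finset.mem_range.mp hj)) with hjm | hjm
      · rw [if_pos hjm]
        subst hjm
        refine Tendsto.congr' ?_ hφj
        filter_upwards [htne] with k hk
        have hc : (t k : ℂ) ≠ 0 := by
          simpa using (by linarith : t k ≠ 0)
        rw [inv_pow, inv_mul_cancel_left₀ (pow_ne_zero _ hc)]
      · rw [if_neg (by omega)]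
        have hlim : Tendsto (fun k => ((t k:ℂ)⁻¹)^(m-j) * φ j (v k)) atTop (𝓝 0) := by
          have := (hinv.pow (m-j)).mul hφj
          rwa [zero_pow (by omega), zero_mul] at this
        refine Tendsto.congr' ?_ hlim
        filter_upwards [htne] with k hk
        have hc : (t k : ℂ) ≠ 0 := by
          simpa using (by linarith : t k ≠ 0)
        rw [inv_pow, inv_pow, ← mul_assoc]
        congr 1
        have hpow : (t k:ℂ)^j * (t k:ℂ)^(m-j) = (t k:ℂ)^m := by
          rw [← pow_add]; congr 1; omega
        rw [← hpow, mul_inv, mul_right_comm, inv_mul_cancel₀ (pow_ne_zero _ hc), one_mul]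
    have := tendsto_finset_sum (Finset.range (m+1)) hterm
    rw [Finset.sum_ite_eq' (Finset.range (m+1)) m, if_pos (by simp)] at this
    refine this.congr fun k => ?_
    rw [Finset.mul_sum]
  exact tendsto_nhds_unique h2 h1

lemma coord_le_norm (w : EuclideanSpace ℂ (Fin n)) (i : Fin n) : ‖w i‖ ≤ ‖w‖ := by
  have h := norm_inner_le_norm (𝕜 := ℂ) (EuclideanSpace.single i (1:ℂ)) w
  rw [EuclideanSpace.inner_single_left, map_one, one_mul, EuclideanSpace.norm_single,
    norm_one, one_mul] at h
  exact h

lemma cs (y gr : EuclideanSpace ℂ (Fin n)) :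
    ‖∑ i, y i * gr i‖ ≤ ‖y‖ * ‖gr‖ := by
  set w : EuclideanSpace ℂ (Fin n) :=
    (EuclideanSpace.equiv (Fin n) ℂ).symm (fun i => (starRingEnd ℂ) (y i)) with hw
  have h1 : (inner ℂ w gr : ℂ) = ∑ i, y i * gr i := by
    rw [PiLp.inner_apply]
    refine Finset.sum_congr rfl fun i _ => ?_
    simp [hw, RCLike.inner_apply]
    ring
  have h2 : ‖w‖ = ‖y‖ := by
    rw [EuclideanSpace.norm_eq, EuclideanSpace.norm_eq]
    congr 1
    exact Finset.sum_congr rfl fun i _ => by simp [hw]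
  calc ‖∑ i, y i * gr i‖ = ‖(inner ℂ w gr : ℂ)‖ := by rw [h1]
    _ ≤ ‖w‖ * ‖gr‖ := norm_inner_le_norm w gr
    _ = ‖y‖ * ‖gr‖ := by rw [h2]

end S2Aux

open S2Aux in
/-- If `f : ℂⁿ → ℂ` is a polynomial of degree `d ≥ 2`, `c ∈ ℂ`, and `(x_k)` is a sequence with
`‖x_k‖ → ∞`, `x_k/‖x_k‖ → u` with `‖u‖ = 1`, `f(x_k) → c` and `‖x_k‖·‖∇f(x_k)‖ → 0`,
then `∇f_d(u) = 0` and `f_{d-1}(u) = 0`. -/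
theorem statement2 {n : ℕ} (f : MvPolynomial (Fin n) ℂ) (d : ℕ) (hd : 2 ≤ d)
    (hdeg : f.totalDegree = d) (c : ℂ)
    (x : ℕ → EuclideanSpace ℂ (Fin n)) (u : EuclideanSpace ℂ (Fin n)) (hu : ‖u‖ = 1)
    (hnorm : Tendsto (fun k => ‖x k‖) atTop atTop)
    (hdir : Tendsto (fun k => (‖x k‖)⁻¹ • x k) atTop (𝓝 u))
    (hval : Tendsto (fun k => cpevalE f (x k)) atTop (𝓝 c))
    (hmal : Tendsto (fun k => ‖x k‖ * ‖cpgrad f (x k)‖) atTop (𝓝 0)) :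
    cpgrad (homogeneousComponent d f) u = 0 ∧
      cpevalE (homogeneousComponent (d - 1) f) u = 0 := by
  classical
  set e := EuclideanSpace.equiv (Fin n) ℂ with he
  set g : ℕ → MvPolynomial (Fin n) ℂ := fun j => homogeneousComponent j f with hg
  set t : ℕ → ℝ := fun k => ‖x k‖ with ht
  set v : ℕ → EuclideanSpace ℂ (Fin n) := fun k => (‖x k‖)⁻¹ • x k with hvdef
  have htt : Tendsto t atTop atTop := hnorm
  have hvu : Tendsto v atTop (𝓝 u) := hdir
  have htne : ∀ᶠ k in atTop, (1:ℝ) ≤ t k := htt.eventually_ge_atTop 1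
  have hgh : ∀ j, (g j).IsHomogeneous j := fun j => homogeneousComponent_isHomogeneous j f
  have hfd : ∑ j ∈ Finset.range (d+1), g j = f := by
    rw [hg, ← hdeg]
    exact f.sum_homogeneousComponent
  -- scaled representation
  have hxk : ∀ᶠ k in atTop, e (x k) = (t k : ℂ) • e (v k) := by
    filter_upwards [htne] with k hk
    have h0 : t k ≠ 0 := by intro h; rw [h] at hk; linarith
    have : (t k : ℂ) • v k = x k := by
      rw [hvdef]
      simp only []
      rw [Complex.coe_smul, smul_smul, mul_inv_cancel₀ h0, one_smul]
    rw [← this, map_smul]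
  -- the two continuous families
  set F : ℕ → EuclideanSpace ℂ (Fin n) → ℂ := fun j w => eval (e w) (g j) with hF
  set P : Fin n → ℕ → EuclideanSpace ℂ (Fin n) → ℂ :=
    fun i j w => eval (e w) (pderiv i (g j)) with hP
  have hFc : ∀ j, Continuous (F j) :=
    fun j => (MvPolynomial.continuous_eval (g j)).comp e.continuous
  have hPc : ∀ i j, Continuous (P i j) :=
    fun i j => (MvPolynomial.continuous_eval (pderiv i (g j))).comp e.continuous
  -- decomposition of values
  have hA : ∀ᶠ k in atTop, cpevalE f (x k)
      = ∑ j ∈ Finset.range (d+1), (t k : ℂ) ^ j * F j (v k) := by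
    filter_upwards [hxk] with k hk
    rw [cpevalE, ← hfd, map_sum]
    refine Finset.sum_congr rfl fun j _ => ?_
    rw [show (EuclideanSpace.equiv (Fin n) ℂ) (x k) = e (x k) from rfl, hk,
      eval_smul_hom (hgh j)]
  -- decomposition of scaled partial derivatives
  have hB : ∀ i, ∀ᶠ k in atTop, (t k : ℂ) * eval (e (x k)) (pderiv i f)
      = ∑ j ∈ Finset.range (d+1), (t k : ℂ) ^ j * P i j (v k) := by
    intro i
    filter_upwards [hxk] with k hk
    have hpd : pderiv i f = ∑ j ∈ Finset.range (d+1), pderiv i (g j) := by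
      rw [← map_sum, hfd]
    rw [hpd, map_sum, Finset.mul_sum]
    refine Finset.sum_congr rfl fun j hj => ?_
    rw [hk, eval_smul_hom (isHomogeneous_pderiv (hgh j) i)]
    rcases Nat.eq_zero_or_pos j with h0 | h0
    · subst h0
      have : pderiv i (g 0) = 0 := by
        rw [hg]; simp only []
        rw [homogeneousComponent_zero, pderiv_C]
      simp [this, hP]
    · rw [← mul_assoc]
      congr 1
      rw [← pow_succ']
      congr 1
      omega
  -- Euler-based decomposition
  have hC : ∀ᶠ k in atTop, ∑ i, (e (x k)) i * eval (e (x k)) (pderiv i f)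
      = ∑ j ∈ Finset.range (d+1), (j : ℂ) * ((t k : ℂ) ^ j * F j (v k)) := by
    filter_upwards [hxk] with k hk
    have hpd : ∀ i, eval (e (x k)) (pderiv i f)
        = ∑ j ∈ Finset.range (d+1), eval (e (x k)) (pderiv i (g j)) := fun i => by
      rw [← map_sum, ← map_sum, hfd]
    simp_rw [hpd, Finset.mul_sum]
    rw [Finset.sum_comm]
    refine Finset.sum_congr rfl fun j _ => ?_
    rw [euler (hgh j) (e (x k))]
    congr 1
    rw [hk, eval_smul_hom (hgh j)]
  -- limit of scaled partial derivatives
  have hL1 : ∀ i, Tendsto (fun k => (t k : ℂ) * eval (e (x k)) (pderiv i f)) atTop (𝓝 0) := by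
    intro i
    refine squeeze_zero_norm (fun k => ?_) hmal
    rw [norm_mul, Complex.norm_real, Real.norm_eq_abs, abs_of_nonneg (norm_nonneg (x k))]
    have hco : eval (e (x k)) (pderiv i f) = (cpgrad f (x k)) i := rfl
    rw [hco]
    exact mul_le_mul_of_nonneg_left (coord_le_norm _ i) (norm_nonneg _)
  -- limit of the Euler sum
  have hL2 : Tendsto (fun k => ∑ i, (e (x k)) i * eval (e (x k)) (pderiv i f)) atTop (𝓝 0) := by
    refine squeeze_zero_norm (fun k => ?_) hmal
    exact cs (x k) (cpgrad f (x k))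
  -- first claim
  have hgrad : ∀ i, eval (e u) (pderiv i (g d)) = 0 := by
    intro i
    exact key d (by omega) (P i) (hPc i) t htt v u hvu 0
      (Tendsto.congr' (hB i) (hL1 i))
  constructor
  · show cpgrad (g d) u = 0
    rw [cpgrad]
    have hz : (fun i => eval (EuclideanSpace.equiv (Fin n) ℂ u) (pderiv i (g d)))
        = (0 : Fin n → ℂ) := by
      funext i
      rw [Pi.zero_apply]
      exact hgrad i
    rw [hz, map_zero]
  · -- second claim
    set φ : ℕ → EuclideanSpace ℂ (Fin n) → ℂ := fun j w => ((d:ℂ) - j) * F j w with hφdef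
    have hφc : ∀ j, Continuous (φ j) := fun j => continuous_const.mul (hFc j)
    have hS2 : Tendsto (fun k => (d:ℂ) * cpevalE f (x k)
        - ∑ i, (e (x k)) i * eval (e (x k)) (pderiv i f)) atTop (𝓝 ((d:ℂ)*c)) := by
      have h := (Filter.Tendsto.mul (tendsto_const_nhds (x := (d:ℂ))) hval).sub hL2
      simpa using h
    have heq : ∀ᶠ k in atTop, (d:ℂ) * cpevalE f (x k)
        - ∑ i, (e (x k)) i * eval (e (x k)) (pderiv i f)
        = ∑ j ∈ Finset.range ((d-1)+1), (t k:ℂ)^j * φ j (v k) := by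
      filter_upwards [hA, hC] with k hkA hkC
      rw [hkA, hkC, Finset.mul_sum, ← Finset.sum_sub_distrib]
      have h1 : ∀ j, (d:ℂ) * ((t k:ℂ)^j * F j (v k)) - (j:ℂ) * ((t k:ℂ)^j * F j (v k))
          = (t k:ℂ)^j * φ j (v k) := fun j => by rw [hφdef]; ring
      simp_rw [h1]
      have hrange : (d-1)+1 = d := by omega
      rw [hrange, Finset.sum_range_succ]
      have hzero : φ d (v k) = 0 := by simp [hφdef]
      rw [hzero, mul_zero, add_zero]
    have hkey := key (d-1) (by omega) φ hφc t htt v u hvu ((d:ℂ)*c)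
      (Tendsto.congr' heq hS2)
    have hco : ((d:ℂ) - ((d-1 : ℕ):ℂ)) = 1 := by
      rw [Nat.cast_sub (by omega : 1 ≤ d)]
      push_cast
      ring
    rw [hφdef] at hkey
    simp only [] at hkey
    rw [hco, one_mul] at hkey
    exact hkey
end

section
/- Let f : ℝⁿ → ℝ be a C¹ function, b ∈ ℝ, ε > 0 and A, C > 0. Then there is no C¹ curve α : [−ε, 0) → ℝⁿ ∖ {0} satisfying all of the following: f(α(s)) = s + b for all s; ‖α(s)‖ → +∞ as s → 0⁻; ‖α(s)‖·‖∇f(α(s))‖ ≥ C for all s; |⟨∇f(α(s)), α(s)⟩| ≥ A·‖∇f(α(s))‖·‖α(s)‖ for all s; and ⟨α′(s)/‖α′(s)‖, α(s)/‖α(s)‖⟩ → 1 as s → 0⁻. -/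
open Filter Topology
open scoped RealInnerProductSpace

private lemma aux_w (A δ W Y cc : ℝ) (hA : 0 < A) (hδ0 : 0 < δ) (hδhalf : δ ≤ 1/2)
    (hδA : 2*δ ≤ (A/4)^2) (hW : 0 ≤ W) (hY : 0 < Y)
    (hc : (1-δ)*Y ≤ cc) (hw2 : W^2 = Y^2 - cc^2) : W ≤ (A/4)*Y := by
  have hcnn : 0 ≤ (1-δ)*Y := by
    have : (0:ℝ) ≤ 1 - δ := by linarith
    positivity
  have hcsq : ((1-δ)*Y)^2 ≤ cc^2 := pow_le_pow_left₀ hcnn hc 2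
  have h2 : W^2 ≤ 2*δ*Y^2 := by nlinarith [sq_nonneg Y]
  have h3 : W^2 ≤ ((A/4)*Y)^2 := by nlinarith [sq_nonneg Y]
  nlinarith [mul_pos (show (0:ℝ) < A/4 by positivity) hY]

private lemma aux_gy (A δ G Y : ℝ) (hA : 0 < A) (hδhalf : δ ≤ 1/2)
    (hG : 0 ≤ G) (hY : 0 ≤ Y)
    (h : (1-δ)*Y*(A*G) ≤ 1 + G*((A/4)*Y)) : (A/4)*(G*Y) ≤ 1 := by
  nlinarith [mul_nonneg (mul_nonneg hA.le hG) hY]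

/-- Let `f : ℝⁿ → ℝ` be `C¹`, `b ∈ ℝ`, `ε > 0`, `A, C > 0`.  There is no `C¹` curve
`α : [−ε, 0) → ℝⁿ ∖ {0}` with `f(α(s)) = s + b`, `‖α(s)‖ → ∞` as `s → 0⁻`,
`‖α(s)‖·‖∇f(α(s))‖ ≥ C`, `|⟨∇f(α(s)), α(s)⟩| ≥ A‖∇f(α(s))‖·‖α(s)‖`, and
`⟨α′(s)/‖α′(s)‖, α(s)/‖α(s)‖⟩ → 1` as `s → 0⁻`. -/
theorem statement12 {n : ℕ} (f : EuclideanSpace ℝ (Fin n) → ℝ) (hf : ContDiff ℝ 1 f)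
    (b ε A C : ℝ) (hε : 0 < ε) (hA : 0 < A) (hC : 0 < C)
    (α α' : ℝ → EuclideanSpace ℝ (Fin n))
    (hderiv : ∀ s ∈ Set.Ico (-ε) (0:ℝ), HasDerivAt α (α' s) s)
    (hC1 : ContinuousOn α' (Set.Ico (-ε) 0))
    (hne : ∀ s ∈ Set.Ico (-ε) (0:ℝ), α s ≠ 0)
    (hfα : ∀ s ∈ Set.Ico (-ε) (0:ℝ), f (α s) = s + b)
    (hinf : Tendsto (fun s => ‖α s‖) (𝓝[<] (0:ℝ)) atTop)
    (hmal : ∀ s ∈ Set.Ico (-ε) (0:ℝ), C ≤ ‖α s‖ * ‖gradient f (α s)‖)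
    (hrad : ∀ s ∈ Set.Ico (-ε) (0:ℝ),
      A * (‖gradient f (α s)‖ * ‖α s‖) ≤ |⟪gradient f (α s), α s⟫|)
    (hlim : Tendsto (fun s => ⟪(‖α' s‖)⁻¹ • α' s, (‖α s‖)⁻¹ • α s⟫)
      (𝓝[<] (0:ℝ)) (𝓝 1)) :
    False := by
  classical
  -- small constant δ
  set δ : ℝ := min (1/2) (A^2/32) with hδdef
  have hδ0 : 0 < δ := lt_min (by norm_num) (by positivity)
  have hδhalf : δ ≤ 1/2 := min_le_left _ _
  have hδA : 2*δ ≤ (A/4)^2 := by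
    have h := min_le_right (1/2:ℝ) (A^2/32)
    have : δ ≤ A^2/32 := h
    nlinarith
  -- eventual alignment
  have hev : ∀ᶠ s in 𝓝[<] (0:ℝ),
      1 - δ ≤ ⟪(‖α' s‖)⁻¹ • α' s, (‖α s‖)⁻¹ • α s⟫ :=
    hlim.eventually (eventually_ge_nhds (by linarith))
  obtain ⟨a, ha0, hasub⟩ := mem_nhdsLT_iff_exists_Ioo_subset.mp hev
  have ha0' : a < 0 := ha0
  set s₀ : ℝ := (max a (-ε)) / 2 with hs₀def
  have ht₀ : max a (-ε) < 0 := max_lt ha0' (by linarith)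
  have hs₀neg : s₀ < 0 := by
    simp only [hs₀def]; linarith
  have hs₀gt : max a (-ε) < s₀ := by
    simp only [hs₀def]; linarith
  have hsub1 : ∀ s ∈ Set.Ico s₀ (0:ℝ), s ∈ Set.Ico (-ε) (0:ℝ) := by
    intro s hs
    have : -ε ≤ max a (-ε) := le_max_right _ _
    exact ⟨by linarith [hs.1, hs₀gt], hs.2⟩
  have hsub2 : ∀ s ∈ Set.Ico s₀ (0:ℝ), s ∈ Set.Ioo a (0:ℝ) := by
    intro s hs
    have : a ≤ max a (-ε) := le_max_left _ _
    exact ⟨by linarith [hs.1, hs₀gt], hs.2⟩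
  -- chain rule: ⟪∇f(α s), α' s⟫ = 1
  have hone : ∀ s ∈ Set.Ico s₀ (0:ℝ), ⟪gradient f (α s), α' s⟫ = 1 := by
    intro s hs
    have hs' := hsub1 s hs
    have hga : HasGradientAt f (gradient f (α s)) (α s) :=
      ((hf.differentiable one_ne_zero) (α s)).hasGradientAt
    have hd : HasDerivAt (fun t => f (α t)) ⟪gradient f (α s), α' s⟫ s := by
      have h2 := hga.hasFDerivAt.comp_hasDerivAt s (hderiv s hs')
      exact h2.congr_deriv InnerProductSpace.toDual_apply_apply
    have hd2 : HasDerivAt (fun t => f (α t)) 1 s := by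
      have h1 : HasDerivAt (fun t : ℝ => t + b) 1 s := by
        simpa using (hasDerivAt_id s).add_const b
      apply h1.congr_of_eventuallyEq
      have hmem : Set.Ioo (-ε) (0:ℝ) ∈ 𝓝 s := by
        refine isOpen_Ioo.mem_nhds ⟨?_, hs.2⟩
        have : -ε ≤ max a (-ε) := le_max_right _ _
        linarith [hs.1, hs₀gt]
      filter_upwards [hmem] with t ht
      exact hfα t ⟨ht.1.le, ht.2⟩
    exact hd.unique hd2
  -- key bound : ⟪α s, α' s⟫ ≤ (4/(A*C)) * ‖α s‖^2
  have hkey : ∀ s ∈ Set.Ico s₀ (0:ℝ), ⟪α s, α' s⟫ ≤ (4/(A*C)) * ‖α s‖^2 := by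
    intro s hs
    have hs' := hsub1 s hs
    set x := α s with hx
    set y := α' s with hy
    set g := gradient f (α s) with hg
    have hx0 : x ≠ 0 := hne s hs'
    have hr : (0:ℝ) < ‖x‖ := norm_pos_iff.mpr hx0
    have h1 : ⟪g, y⟫ = 1 := hone s hs
    have hy0 : y ≠ 0 := by
      intro h; rw [h, inner_zero_right] at h1; norm_num at h1
    have hny : (0:ℝ) < ‖y‖ := norm_pos_iff.mpr hy0
    have hcs : 1 - δ ≤ ⟪(‖y‖)⁻¹ • y, (‖x‖)⁻¹ • x⟫ := hasub (hsub2 s hs)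
    set v : EuclideanSpace ℝ (Fin n) := (‖x‖)⁻¹ • x with hv
    have hvnorm : ‖v‖ = 1 := norm_smul_inv_norm hx0
    set c : ℝ := ⟪y, v⟫ with hcdef
    have hc_ge : (1-δ) * ‖y‖ ≤ c := by
      have : ⟪(‖y‖)⁻¹ • y, v⟫ = (‖y‖)⁻¹ * c := by
        rw [real_inner_smul_left]
      rw [this] at hcs
      have := mul_le_mul_of_nonneg_right hcs (le_of_lt hny)
      field_simp at this ⊢
      linarith
    have hc_le : c ≤ ‖y‖ := by
      calc c ≤ |c| := le_abs_self _
      _ ≤ ‖y‖ * ‖v‖ := abs_real_inner_le_norm _ _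
      _ = ‖y‖ := by rw [hvnorm, mul_one]
    set w : EuclideanSpace ℝ (Fin n) := y - c • v with hw
    have hw2 : ‖w‖^2 = ‖y‖^2 - c^2 := by
      have hnv : ‖c • v‖ = |c| := by rw [norm_smul, hvnorm, mul_one]; rfl
      have hyc : ⟪y, c • v⟫ = c^2 := by rw [real_inner_smul_right, ← hcdef]; ring
      calc ‖w‖^2 = ‖y‖^2 - 2 * ⟪y, c • v⟫ + ‖c • v‖^2 := by
            rw [hw]; exact norm_sub_sq_real y (c • v)
      _ = ‖y‖^2 - 2 * c^2 + c^2 := by rw [hyc, hnv, sq_abs]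
      _ = ‖y‖^2 - c^2 := by ring
    have hcnn : 0 ≤ (1-δ) * ‖y‖ := by
      have : (0:ℝ) ≤ 1 - δ := by linarith
      positivity
    have hwle : ‖w‖ ≤ (A/4) * ‖y‖ :=
      aux_w A δ ‖w‖ ‖y‖ c hA hδ0 hδhalf hδA (norm_nonneg w) hny hc_ge hw2
    have hdecomp : ⟪g, y⟫ = c * ⟪g, v⟫ + ⟪g, w⟫ := by
      have : y = c • v + w := by rw [hw]; abel
      rw [this, inner_add_right, real_inner_smul_right]
    have hgv : A * ‖g‖ ≤ |⟪g, v⟫| := by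
      have hgx : A * (‖g‖ * ‖x‖) ≤ |⟪g, x⟫| := hrad s hs'
      have : ⟪g, v⟫ = (‖x‖)⁻¹ * ⟪g, x⟫ := by rw [hv, real_inner_smul_right]
      rw [this, abs_mul, abs_of_pos (inv_pos.mpr hr)]
      rw [← mul_le_mul_iff_of_pos_right hr]
      calc A * ‖g‖ * ‖x‖ = A * (‖g‖ * ‖x‖) := by ring
      _ ≤ |⟪g, x⟫| := hgx
      _ = (‖x‖)⁻¹ * |⟪g, x⟫| * ‖x‖ := by field_simp
    have hgw : |⟪g, w⟫| ≤ ‖g‖ * ((A/4) * ‖y‖) := by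
      calc |⟪g, w⟫| ≤ ‖g‖ * ‖w‖ := abs_real_inner_le_norm _ _
      _ ≤ ‖g‖ * ((A/4) * ‖y‖) := by
          exact mul_le_mul_of_nonneg_left hwle (norm_nonneg _)
    -- |c * ⟪g,v⟫| ≤ 1 + ‖g‖(A/4)‖y‖
    have hmain : c * |⟪g, v⟫| ≤ 1 + ‖g‖ * ((A/4) * ‖y‖) := by
      have hcpos : 0 ≤ c := le_trans hcnn hc_ge
      have : c * ⟪g, v⟫ = 1 - ⟪g, w⟫ := by rw [← h1, hdecomp]; ring
      rcases le_or_gt 0 ⟪g, v⟫ with h | h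
      · rw [abs_of_nonneg h, this]
        have := neg_abs_le ⟪g, w⟫
        linarith [hgw]
      · have : c * |⟪g, v⟫| = -(c * ⟪g, v⟫) := by
          rw [abs_of_neg h]; ring
        rw [this]
        have h4 : c * ⟪g, v⟫ = 1 - ⟪g, w⟫ := by rw [← h1, hdecomp]; ring
        rw [h4]
        have := le_abs_self ⟪g, w⟫
        linarith [hgw]
    have hgy : (A/4) * (‖g‖ * ‖y‖) ≤ 1 := by
      have h5 : (1-δ) * ‖y‖ * (A * ‖g‖) ≤ c * |⟪g, v⟫| :=
        mul_le_mul hc_ge hgv (by positivity) (le_trans hcnn hc_ge)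
      exact aux_gy A δ ‖g‖ ‖y‖ hA hδhalf (norm_nonneg g) (norm_nonneg y)
        (le_trans h5 hmain)
    have hgC : C / ‖x‖ ≤ ‖g‖ := by
      rw [div_le_iff₀ hr, mul_comm]
      exact hmal s hs'
    have hyb : ‖y‖ ≤ 4 * ‖x‖ / (A * C) := by
      have hg0 : 0 < ‖g‖ := lt_of_lt_of_le (by positivity) hgC
      rw [le_div_iff₀ (by positivity)]
      have h6 : (A/4) * ((C/‖x‖) * ‖y‖) ≤ (A/4) * (‖g‖ * ‖y‖) := by
        apply mul_le_mul_of_nonneg_left _ (by positivity)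
        exact mul_le_mul_of_nonneg_right hgC (norm_nonneg _)
      have h7 : (A/4) * ((C/‖x‖) * ‖y‖) ≤ 1 := le_trans h6 hgy
      have h8 := mul_le_mul_of_nonneg_right h7 hr.le
      rw [one_mul] at h8
      have h9 : (A/4) * ((C/‖x‖) * ‖y‖) * ‖x‖ = (A/4)*(C*‖y‖) := by
        field_simp
      rw [h9] at h8
      linarith
    calc ⟪x, y⟫ ≤ |⟪x, y⟫| := le_abs_self _
    _ ≤ ‖x‖ * ‖y‖ := abs_real_inner_le_norm _ _
    _ ≤ ‖x‖ * (4 * ‖x‖ / (A*C)) := mul_le_mul_of_nonneg_left hyb (norm_nonneg _)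
    _ = (4/(A*C)) * ‖x‖^2 := by field_simp
  -- the Lyapunov function ψ
  set K : ℝ := 8 / (A*C) with hK
  have hKpos : 0 < K := by positivity
  set φ : ℝ → ℝ := fun t => ‖α t‖^2 with hφ
  have hφ' : ∀ s ∈ Set.Ico s₀ (0:ℝ), HasDerivAt φ (2 * ⟪α s, α' s⟫) s := by
    intro s hs
    have hd := (hderiv s (hsub1 s hs))
    have h2 : HasDerivAt (fun t => ⟪α t, α t⟫) (⟪α s, α' s⟫ + ⟪α' s, α s⟫) s :=
      hd.inner ℝ hd
    have h3 : (⟪α s, α' s⟫ + ⟪α' s, α s⟫ : ℝ) = 2 * ⟪α s, α' s⟫ := by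
      rw [real_inner_comm (α' s) (α s)]; ring
    rw [h3] at h2
    apply h2.congr_of_eventuallyEq
    filter_upwards with t
    rw [hφ]; exact (real_inner_self_eq_norm_sq _).symm
  set ψ : ℝ → ℝ := fun t => φ t * Real.exp (-(K * t)) with hψ
  have hψ' : ∀ s ∈ Set.Ico s₀ (0:ℝ),
      HasDerivAt ψ ((2 * ⟪α s, α' s⟫ - K * φ s) * Real.exp (-(K * s))) s := by
    intro s hs
    have hexp : HasDerivAt (fun t : ℝ => Real.exp (-(K * t)))
        (Real.exp (-(K * s)) * (-K)) s := by
      have : HasDerivAt (fun t : ℝ => -(K * t)) (-K) s := by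
        simpa using ((hasDerivAt_id s).const_mul K).fun_neg
      exact this.exp
    have := (hφ' s hs).fun_mul hexp
    exact this.congr_deriv (by ring)
  have hψanti : AntitoneOn ψ (Set.Ico s₀ (0:ℝ)) := by
    apply antitoneOn_of_deriv_nonpos (convex_Ico s₀ 0)
    · intro t ht
      exact ((hψ' t ht).continuousAt).continuousWithinAt
    · intro t ht
      rw [interior_Ico] at ht
      exact ((hψ' t (Set.Ioo_subset_Ico_self ht)).differentiableAt).differentiableWithinAt
    · intro t ht
      rw [interior_Ico] at ht
      have ht' : t ∈ Set.Ico s₀ (0:ℝ) := Set.Ioo_subset_Ico_self ht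
      rw [((hψ' t ht').deriv)]
      have h2 : ⟪α t, α' t⟫ ≤ (4/(A*C)) * ‖α t‖^2 := hkey t ht'
      have h3 : 2 * ⟪α t, α' t⟫ - K * φ t ≤ 0 := by
        rw [hK, hφ]; dsimp only
        have h2' : (8/(A*C)) * ‖α t‖^2 = 2 * ((4/(A*C)) * ‖α t‖^2) := by ring
        linarith [h2]
      exact mul_nonpos_of_nonpos_of_nonneg h3 (Real.exp_pos _).le
  -- conclude boundedness, contradiction with hinf
  set M : ℝ := φ s₀ * Real.exp (-(K * s₀)) with hM
  have hMnn : 0 ≤ M := by positivity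
  have hbound : ∀ s ∈ Set.Ico s₀ (0:ℝ), φ s ≤ M := by
    intro s hs
    have hs₀mem : s₀ ∈ Set.Ico s₀ (0:ℝ) := ⟨le_refl _, hs₀neg⟩
    have h1 : ψ s ≤ ψ s₀ := hψanti hs₀mem hs hs.1
    have h2 : (1:ℝ) ≤ Real.exp (-(K * s)) := by
      rw [Real.one_le_exp_iff]
      have h2a := hs.2
      nlinarith [hKpos]
    have hφnn : 0 ≤ φ s := by positivity
    calc φ s = φ s * 1 := by ring
    _ ≤ φ s * Real.exp (-(K * s)) := mul_le_mul_of_nonneg_left h2 hφnn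
    _ = ψ s := rfl
    _ ≤ ψ s₀ := h1
    _ = M := rfl
  have hIoo : Set.Ioo s₀ (0:ℝ) ∈ 𝓝[<] (0:ℝ) := Ioo_mem_nhdsLT hs₀neg
  have hbig : ∀ᶠ s in 𝓝[<] (0:ℝ), M + 1 ≤ ‖α s‖ ∧ 1 ≤ ‖α s‖ :=
    (hinf.eventually_ge_atTop (M+1)).and (hinf.eventually_ge_atTop 1)
  obtain ⟨s, ⟨hb1, hb2⟩, hsIoo⟩ := (hbig.and hIoo).exists
  have hsIco : s ∈ Set.Ico s₀ (0:ℝ) := Set.Ioo_subset_Ico_self hsIoo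
  have h := hbound s hsIco
  rw [hφ] at h
  dsimp only at h
  have h4 : M + 1 ≤ ‖α s‖ ^ 2 := by
    calc M + 1 ≤ ‖α s‖ := hb1
    _ = ‖α s‖ * 1 := by ring
    _ ≤ ‖α s‖ * ‖α s‖ := mul_le_mul_of_nonneg_left hb2 (norm_nonneg _)
    _ = ‖α s‖ ^ 2 := (sq ‖α s‖).symm
  linarith
end

section
/- Let f : ℝⁿ → ℝ be a C¹ function, b ∈ ℝ, ε > 0 and A > 0, and let θ : (0, ε] → (0, +∞) be a continuous function with ∫₀^ε dt/θ(t) < +∞. Suppose α : [−ε, 0) → ℝⁿ ∖ {0} is a C¹ curve satisfying: f(α(s)) = s + b for all s; ‖α(s)‖·‖∇f(α(s))‖ ≥ θ(−s) for all s; |⟨∇f(α(s)), α(s)⟩| ≥ A·‖∇f(α(s))‖·‖α(s)‖ for all s; and ⟨α′(s)/‖α′(s)‖, α(s)/‖α(s)‖⟩ → 1 as s → 0⁻. Then ‖α(s)‖ is bounded on [−ε, 0); in particular ‖α(s)‖ does not tend to +∞ as s → 0⁻. -/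
open Filter Topology MeasureTheory
open scoped RealInnerProductSpace

/-- Auxiliary: if the unit tangent is close to the unit radial direction, the gradient is
mostly radial, and `⟪G, a'⟫ = 1`, then `‖a'‖ ≤ 2/(A‖G‖)`. -/
theorem statement13_aux {n : ℕ} (G a a' : EuclideanSpace ℝ (Fin n)) (A : ℝ) (hA : 0 < A)
    (ha : a ≠ 0) (h1 : ⟪G, a'⟫ = 1)
    (hrad : A * (‖G‖ * ‖a‖) ≤ |⟪G, a⟫|)
    (hang : 1 - A^2/8 < ⟪(‖a'‖)⁻¹ • a', (‖a‖)⁻¹ • a⟫) :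
    ‖a'‖ ≤ 2 / (A * ‖G‖) := by
  have hG : G ≠ 0 := by rintro rfl; simp at h1
  have ha' : a' ≠ 0 := by rintro rfl; simp at h1
  have hGpos : 0 < ‖G‖ := norm_pos_iff.mpr hG
  have hapos : 0 < ‖a‖ := norm_pos_iff.mpr ha
  have ha'pos : 0 < ‖a'‖ := norm_pos_iff.mpr ha'
  set u : EuclideanSpace ℝ (Fin n) := (‖a‖)⁻¹ • a with hu
  set v : EuclideanSpace ℝ (Fin n) := (‖a'‖)⁻¹ • a' with hv
  have hnu : ‖u‖ = 1 := by
    rw [hu, norm_smul, norm_inv, norm_norm, inv_mul_cancel₀ hapos.ne']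
  have hnv : ‖v‖ = 1 := by
    rw [hv, norm_smul, norm_inv, norm_norm, inv_mul_cancel₀ ha'pos.ne']
  have hsq : ‖v - u‖ ^ 2 ≤ (A/2)^2 := by
    rw [norm_sub_sq_real, hnu, hnv]
    nlinarith [hang]
  have hvu : ‖v - u‖ ≤ A/2 := by
    nlinarith [norm_nonneg (v - u), hsq]
  have hGu : A * ‖G‖ ≤ |⟪G, u⟫| := by
    rw [hu, real_inner_smul_right, abs_mul, abs_of_pos (inv_pos.mpr hapos)]
    rw [← mul_le_mul_iff_of_pos_left hapos]
    calc ‖a‖ * (A * ‖G‖) = A * (‖G‖ * ‖a‖) := by ring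
      _ ≤ |⟪G, a⟫| := hrad
      _ = ‖a‖ * (‖a‖⁻¹ * |⟪G, a⟫|) := by field_simp
  have hGv : ⟪G, v⟫ = (‖a'‖)⁻¹ := by
    rw [hv, real_inner_smul_right, h1, mul_one]
  have hdiff : |⟪G, v⟫ - ⟪G, u⟫| ≤ ‖G‖ * (A/2) := by
    rw [← inner_sub_right]
    exact (abs_real_inner_le_norm G (v - u)).trans (by
      have := mul_le_mul_of_nonneg_left hvu hGpos.le
      simpa [hnv] using this)
  have hcase := le_abs.mp hGu
  have hvpos : 0 < ⟪G, v⟫ := by rw [hGv]; positivity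
  have hGv2 : A * ‖G‖ / 2 ≤ ⟪G, v⟫ := by
    rcases hcase with h | h
    · have := abs_le.mp hdiff
      linarith [this.1]
    · have := abs_le.mp hdiff
      nlinarith [this.2]
  rw [hGv] at hGv2
  have h2pos : 0 < A * ‖G‖ / 2 := by positivity
  calc ‖a'‖ = ((‖a'‖)⁻¹)⁻¹ := by rw [inv_inv]
    _ ≤ (A * ‖G‖ / 2)⁻¹ := inv_anti₀ h2pos hGv2
    _ = 2 / (A * ‖G‖) := by rw [inv_div]

/-- Let `f : ℝⁿ → ℝ` be `C¹`, `b ∈ ℝ`, `ε > 0`, `A > 0`, and let `θ : (0, ε] → (0, ∞)` be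
continuous with `∫₀^ε dt/θ(t) < ∞`.  If `α : [−ε, 0) → ℝⁿ ∖ {0}` is a `C¹` curve with
`f(α(s)) = s + b`, `‖α(s)‖·‖∇f(α(s))‖ ≥ θ(−s)`,
`|⟨∇f(α(s)), α(s)⟩| ≥ A‖∇f(α(s))‖·‖α(s)‖`, and
`⟨α′(s)/‖α′(s)‖, α(s)/‖α(s)‖⟩ → 1` as `s → 0⁻`, then `‖α(s)‖` is bounded on `[−ε, 0)`;
in particular `‖α(s)‖` does not tend to `+∞` as `s → 0⁻`. -/
theorem statement13 {n : ℕ} (f : EuclideanSpace ℝ (Fin n) → ℝ) (hf : ContDiff ℝ 1 f)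
    (b ε A : ℝ) (hε : 0 < ε) (hA : 0 < A)
    (θ : ℝ → ℝ) (hθpos : ∀ t ∈ Set.Ioc (0:ℝ) ε, 0 < θ t)
    (hθcont : ContinuousOn θ (Set.Ioc (0:ℝ) ε))
    (hθint : IntervalIntegrable (fun t => (θ t)⁻¹) volume 0 ε)
    (α α' : ℝ → EuclideanSpace ℝ (Fin n))
    (hderiv : ∀ s ∈ Set.Ico (-ε) (0:ℝ), HasDerivAt α (α' s) s)
    (hC1 : ContinuousOn α' (Set.Ico (-ε) 0))
    (hne : ∀ s ∈ Set.Ico (-ε) (0:ℝ), α s ≠ 0)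
    (hfα : ∀ s ∈ Set.Ico (-ε) (0:ℝ), f (α s) = s + b)
    (hmal : ∀ s ∈ Set.Ico (-ε) (0:ℝ), θ (-s) ≤ ‖α s‖ * ‖gradient f (α s)‖)
    (hrad : ∀ s ∈ Set.Ico (-ε) (0:ℝ),
      A * (‖gradient f (α s)‖ * ‖α s‖) ≤ |⟪gradient f (α s), α s⟫|)
    (hlim : Tendsto (fun s => ⟪(‖α' s‖)⁻¹ • α' s, (‖α s‖)⁻¹ • α s⟫)
      (𝓝[<] (0:ℝ)) (𝓝 1)) :
    (∃ M : ℝ, ∀ s ∈ Set.Ico (-ε) (0:ℝ), ‖α s‖ ≤ M) ∧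
      ¬ Tendsto (fun s => ‖α s‖) (𝓝[<] (0:ℝ)) atTop := by
  have hcont : ContinuousOn α (Set.Ico (-ε) 0) :=
    fun s hs => (hderiv s hs).continuousAt.continuousWithinAt
  -- The chain rule identity `⟪∇f(α s), α' s⟫ = 1` at interior points.
  have hkey : ∀ s ∈ Set.Ioo (-ε) (0:ℝ), ⟪gradient f (α s), α' s⟫ = 1 := by
    intro s hs
    have hmem : s ∈ Set.Ico (-ε) (0:ℝ) := ⟨hs.1.le, hs.2⟩
    have hdiffAt : DifferentiableAt ℝ f (α s) := (hf.differentiable one_ne_zero).differentiableAt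
    have hg : HasGradientAt f (gradient f (α s)) (α s) := hdiffAt.hasGradientAt
    have hcomp : HasDerivAt (fun t => f (α t))
        ((InnerProductSpace.toDual ℝ _ (gradient f (α s))) (α' s)) s :=
      hg.hasFDerivAt.comp_hasDerivAt s (hderiv s hmem)
    have hcomp' : HasDerivAt (fun t => f (α t)) (⟪gradient f (α s), α' s⟫) s := by
      simpa [InnerProductSpace.toDual_apply_apply] using hcomp
    have heq : (fun t => f (α t)) =ᶠ[𝓝 s] fun t => t + b := by
      filter_upwards [Ioo_mem_nhds hs.1 hs.2] with t ht using hfα t ⟨ht.1.le, ht.2⟩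
    exact (heq.hasDerivAt_iff.mp hcomp').unique ((hasDerivAt_id s).add_const b)
  -- Choose a left neighborhood of `0` where the angle condition holds.
  have hev : ∀ᶠ s in 𝓝[<] (0:ℝ),
      1 - A^2/8 < ⟪(‖α' s‖)⁻¹ • α' s, (‖α s‖)⁻¹ • α s⟫ :=
    hlim.eventually (eventually_gt_nhds (by nlinarith))
  obtain ⟨l, hl, hsub⟩ := mem_nhdsLT_iff_exists_Ioo_subset.mp hev
  set s₀ : ℝ := max l (-ε/2) with hs₀def
  have hs₀neg : s₀ < 0 := max_lt hl (by linarith)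
  have hs₀ε : -ε < s₀ := lt_of_lt_of_le (by linarith) (le_max_right _ _)
  set s₁ : ℝ := s₀/2 with hs₁def
  have hs₁gt : s₀ < s₁ := by rw [hs₁def]; linarith
  have hs₁neg : s₁ < 0 := by rw [hs₁def]; linarith
  have hs₁ε : -ε < s₁ := hs₀ε.trans hs₁gt
  -- Derivative of `log ⟪α t, α t⟫`.
  have hposin : ∀ t ∈ Set.Ico (-ε) (0:ℝ), (0:ℝ) < ⟪α t, α t⟫ := by
    intro t ht
    rw [real_inner_self_eq_norm_sq]
    exact pow_pos (norm_pos_iff.mpr (hne t ht)) 2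
  have hderivρ : ∀ t ∈ Set.Ico (-ε) (0:ℝ),
      HasDerivAt (fun r => Real.log ⟪α r, α r⟫) ((⟪α t, α t⟫)⁻¹ * (2 * ⟪α t, α' t⟫)) t := by
    intro t ht
    have hin : HasDerivAt (fun r => ⟪α r, α r⟫) (⟪α t, α' t⟫ + ⟪α' t, α t⟫) t :=
      (hderiv t ht).inner ℝ (hderiv t ht)
    have hlog := (Real.hasDerivAt_log (hposin t ht).ne').comp t hin
    have hval : (⟪α t, α t⟫)⁻¹ * (⟪α t, α' t⟫ + ⟪α' t, α t⟫)
        = (⟪α t, α t⟫)⁻¹ * (2 * ⟪α t, α' t⟫) := by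
      rw [real_inner_comm (α' t) (α t)]; ring
    rw [← hval]
    exact hlog
  -- Pointwise bound on the logarithmic derivative on `(s₀, 0)`.
  have hbnd : ∀ t ∈ Set.Ioo s₀ (0:ℝ),
      (⟪α t, α t⟫)⁻¹ * (2 * ⟪α t, α' t⟫) ≤ 4/A * (θ (-t))⁻¹ := by
    intro t ht
    have htIco : t ∈ Set.Ico (-ε) (0:ℝ) := ⟨(hs₀ε.trans ht.1).le, ht.2⟩
    have htIoo : t ∈ Set.Ioo (-ε) (0:ℝ) := ⟨hs₀ε.trans ht.1, ht.2⟩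
    have hang : 1 - A^2/8 < ⟪(‖α' t‖)⁻¹ • α' t, (‖α t‖)⁻¹ • α t⟫ :=
      hsub ⟨(le_max_left _ _).trans_lt ht.1, ht.2⟩
    have h1 := hkey t htIoo
    have hG : gradient f (α t) ≠ 0 := by
      intro h0; rw [h0] at h1; simp at h1
    have hGpos : 0 < ‖gradient f (α t)‖ := norm_pos_iff.mpr hG
    have hapos : 0 < ‖α t‖ := norm_pos_iff.mpr (hne t htIco)
    have ha'bnd : ‖α' t‖ ≤ 2 / (A * ‖gradient f (α t)‖) :=
      statement13_aux (gradient f (α t)) (α t) (α' t) A hA (hne t htIco) h1 (hrad t htIco) hang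
    have hθt : 0 < θ (-t) := hθpos (-t) ⟨by linarith [ht.2], by linarith [htIco.1]⟩
    have hmal' : θ (-t) ≤ ‖α t‖ * ‖gradient f (α t)‖ := hmal t htIco
    calc (⟪α t, α t⟫)⁻¹ * (2 * ⟪α t, α' t⟫)
        = 2 * ⟪α t, α' t⟫ / ‖α t‖^2 := by
          rw [real_inner_self_eq_norm_sq, inv_mul_eq_div]
      _ ≤ 2 * (‖α t‖ * ‖α' t‖) / ‖α t‖^2 := by
          gcongr
          exact real_inner_le_norm _ _
      _ = 2 * ‖α' t‖ / ‖α t‖ := by field_simp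
      _ ≤ 2 * (2 / (A * ‖gradient f (α t)‖)) / ‖α t‖ := by gcongr
      _ = 4 / (A * (‖α t‖ * ‖gradient f (α t)‖)) := by field_simp; ring
      _ ≤ 4 / (A * θ (-t)) := by
          gcongr
      _ = 4/A * (θ (-t))⁻¹ := by field_simp
  -- Integrate the bound from `s₁` to `s`.
  set C : ℝ := ∫ t in (0:ℝ)..(-s₁), (θ t)⁻¹ with hC
  set B : ℝ := Real.log ⟪α s₁, α s₁⟫ + 4/A * C with hB
  have hs₁Ico : s₁ ∈ Set.Ico (-ε) (0:ℝ) := ⟨hs₁ε.le, hs₁neg⟩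
  have hglobal : ∀ s ∈ Set.Ico s₁ (0:ℝ), ‖α s‖ ≤ Real.sqrt (Real.exp B) := by
    intro s hs
    have hss : s₁ ≤ s := hs.1
    have hIccIco : Set.Icc s₁ s ⊆ Set.Ico (-ε) (0:ℝ) :=
      fun x hx => ⟨hs₁ε.le.trans hx.1, lt_of_le_of_lt hx.2 hs.2⟩
    have hIccIoo : Set.Icc s₁ s ⊆ Set.Ioo s₀ (0:ℝ) :=
      fun x hx => ⟨hs₁gt.trans_le hx.1, lt_of_le_of_lt hx.2 hs.2⟩
    have hαc : ContinuousOn α (Set.Icc s₁ s) := hcont.mono hIccIco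
    have hα'c : ContinuousOn α' (Set.Icc s₁ s) := hC1.mono hIccIco
    have hρ'c : ContinuousOn (fun t => (⟪α t, α t⟫)⁻¹ * (2 * ⟪α t, α' t⟫)) (Set.Icc s₁ s) := by
      exact ((hαc.inner hαc).inv₀ fun x hx => (hposin x (hIccIco hx)).ne').mul
        (continuousOn_const.mul (hαc.inner hα'c))
    have hint1 : IntervalIntegrable (fun t => (⟪α t, α t⟫)⁻¹ * (2 * ⟪α t, α' t⟫))
        volume s₁ s := by
      apply ContinuousOn.intervalIntegrable
      rwa [Set.uIcc_of_le hss]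
    have hgint : IntervalIntegrable (fun t => 4/A * (θ (-t))⁻¹) volume s₁ s := by
      apply ContinuousOn.intervalIntegrable
      rw [Set.uIcc_of_le hss]
      apply ContinuousOn.mul continuousOn_const
      apply ContinuousOn.inv₀
      · refine hθcont.comp continuous_neg.continuousOn ?_
        intro x hx
        simp only [Set.mem_Ioc]
        constructor
        · linarith [lt_of_le_of_lt hx.2 hs.2]
        · linarith [hs₁ε.le.trans hx.1]
      · intro x hx
        exact (hθpos (-x) ⟨by linarith [lt_of_le_of_lt hx.2 hs.2],
          by linarith [hs₁ε.le.trans hx.1]⟩).ne'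
    have hFTC : (∫ t in s₁..s, (⟪α t, α t⟫)⁻¹ * (2 * ⟪α t, α' t⟫))
        = Real.log ⟪α s, α s⟫ - Real.log ⟪α s₁, α s₁⟫ := by
      apply intervalIntegral.integral_eq_sub_of_hasDerivAt
      · intro x hx
        rw [Set.uIcc_of_le hss] at hx
        exact hderivρ x (hIccIco hx)
      · exact hint1
    have hmono : (∫ t in s₁..s, (⟪α t, α t⟫)⁻¹ * (2 * ⟪α t, α' t⟫))
        ≤ ∫ t in s₁..s, 4/A * (θ (-t))⁻¹ :=
      intervalIntegral.integral_mono_on hss hint1 hgint (fun x hx => hbnd x (hIccIoo hx))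
    have hsubst : (∫ t in s₁..s, (θ (-t))⁻¹) = ∫ t in (-s)..(-s₁), (θ t)⁻¹ :=
      intervalIntegral.integral_comp_neg (fun t => (θ t)⁻¹)
    have hθint' : IntervalIntegrable (fun t => (θ t)⁻¹) volume 0 (-s₁) := by
      apply hθint.mono_set
      rw [Set.uIcc_of_le (by linarith : (0:ℝ) ≤ -s₁), Set.uIcc_of_le hε.le]
      exact Set.Icc_subset_Icc le_rfl (by linarith)
    have hle2 : (∫ t in (-s)..(-s₁), (θ t)⁻¹) ≤ C := by
      apply intervalIntegral.integral_mono_interval (by linarith [hs.2] : (0:ℝ) ≤ -s)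
        (by linarith : -s ≤ -s₁) le_rfl
      · exact (ae_restrict_iff' measurableSet_Ioc).mpr (ae_of_all _
          fun t ht => (inv_nonneg).mpr (hθpos t ⟨ht.1, ht.2.trans (by linarith)⟩).le)
      · exact hθint'
    have hlog : Real.log ⟪α s, α s⟫ ≤ B := by
      have hconst : (∫ t in s₁..s, 4/A * (θ (-t))⁻¹) = 4/A * ∫ t in s₁..s, (θ (-t))⁻¹ :=
        intervalIntegral.integral_const_mul _ _
      have h4A : (0:ℝ) ≤ 4/A := by positivity
      have := mul_le_mul_of_nonneg_left (hsubst ▸ hle2) h4A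
      rw [hB]
      linarith [hFTC ▸ hmono, hconst ▸ this]
    have hsq : ‖α s‖^2 ≤ Real.exp B := by
      have := (Real.log_le_iff_le_exp (hposin s ⟨hs₁ε.le.trans hss, hs.2⟩)).mp hlog
      rwa [real_inner_self_eq_norm_sq] at this
    exact (Real.le_sqrt (norm_nonneg _) (Real.exp_nonneg _)).mpr hsq
  -- Bound on the compact piece `[-ε, s₁]`.
  have hsubK : Set.Icc (-ε) s₁ ⊆ Set.Ico (-ε) (0:ℝ) :=
    fun x hx => ⟨hx.1, lt_of_le_of_lt hx.2 hs₁neg⟩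
  obtain ⟨x₀, hx₀, hmax⟩ := (isCompact_Icc (a := -ε) (b := s₁)).exists_isMaxOn
    ⟨-ε, ⟨le_rfl, hs₁ε.le⟩⟩ ((hcont.mono hsubK).norm)
  set M : ℝ := max ‖α x₀‖ (Real.sqrt (Real.exp B)) with hM
  have hMbnd : ∀ s ∈ Set.Ico (-ε) (0:ℝ), ‖α s‖ ≤ M := by
    intro s hs
    rcases le_or_gt s s₁ with h | h
    · exact le_max_of_le_left (hmax ⟨hs.1, h⟩)
    · exact le_max_of_le_right (hglobal s ⟨h.le, hs.2⟩)
  refine ⟨⟨M, hMbnd⟩, ?_⟩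
  intro hT
  have h1 : ∀ᶠ s in 𝓝[<] (0:ℝ), M + 1 ≤ ‖α s‖ := hT.eventually (eventually_ge_atTop (M+1))
  have h2 : ∀ᶠ s in 𝓝[<] (0:ℝ), s ∈ Set.Ico (-ε) (0:ℝ) :=
    Filter.mem_of_superset (Ioo_mem_nhdsLT_of_mem ⟨neg_lt_zero.mpr hε, le_refl (0:ℝ)⟩)
      (fun x hx => ⟨hx.1.le, hx.2⟩)
  obtain ⟨s, hsa, hsb⟩ := (h1.and h2).exists
  linarith [hMbnd s hsb]
end
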